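/- Inverse probability weighting representation of the GATE (equation behind the IPW estimator): under unconfoundedness and strict overlap, E[ A·Y/π(X) − (1−A)·Y/(1 − π(X)) | σ(Z) ] = E[Y1 − Y0 | σ(Z)] almost surely. -/

import Mathlib

set_option maxHeartbeats 1000000

open MeasureTheory ProbabilityTheory

section Aux

private lemma aux_isPiSystem {Ω' : Type*} (f : Ω' → ℝ) :
    IsPiSystem (Set.preimage f '' (⋃ q : ℚ, {Set.Iic (q : ℝ)})) := by
  rintro _ ⟨s, hs, rfl⟩ _ ⟨t, ht, rfl⟩ -
  simp only [Set.mem_iUnion, Set.mem_singleton_iff] at hs ht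
  obtain ⟨q, rfl⟩ := hs
  obtain ⟨r, rfl⟩ := ht
  refine ⟨Set.Iic ((min q r : ℚ) : ℝ), ?_, ?_⟩
  · simp only [Set.mem_iUnion, Set.mem_singleton_iff]
    exact ⟨min q r, rfl⟩
  · rw [← Set.preimage_inter, Set.Iic_inter_Iic]
    push_cast
    rfl

private lemma aux_comap_eq {Ω' : Type*} (f : Ω' → ℝ) :
    MeasurableSpace.comap f inferInstance
      = MeasurableSpace.generateFrom (Set.preimage f '' (⋃ q : ℚ, {Set.Iic (q : ℝ)})) := by
  conv_lhs => rw [(by rw [← Real.borel_eq_generateFrom_Iic_rat]; exact BorelSpace.measurable_eq :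
    (inferInstance : MeasurableSpace ℝ)
      = MeasurableSpace.generateFrom (⋃ q : ℚ, {Set.Iic (q : ℝ)}))]
  rw [MeasurableSpace.comap_generateFrom]

/-- Key lemma: conditional independence implies the conditional expectation of a product is
the product of conditional expectations (one factor bounded, the other integrable). -/
lemma condexp_mul_of_condIndepFun
    {Ω : Type*} {mΩ : MeasurableSpace Ω} [StandardBorelSpace Ω]
    {μ : Measure Ω} [IsProbabilityMeasure μ] {m' : MeasurableSpace Ω} (hm' : m' ≤ mΩ)
    {f h : Ω → ℝ} (hf : Measurable[mΩ] f) (hh : Measurable[mΩ] h)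
    (hfbd : ∀ ω, |f ω| ≤ 1) (hhi : Integrable h μ)
    (hind : CondIndepFun m' hm' f h μ) :
    μ[fun ω => f ω * h ω | m'] =ᵐ[μ] fun ω => (μ[f | m']) ω * (μ[h | m']) ω := by
  have hf_int : Integrable f μ := by
    exact (integrable_const (1 : ℝ)).mono' hf.aestronglyMeasurable (ae_of_all _ hfbd)
  have hfh_int : Integrable (fun ω => f ω * h ω) μ := by
    refine hhi.abs.mono' (hf.mul hh).aestronglyMeasurable (ae_of_all _ fun ω => ?_)
    rw [Real.norm_eq_abs, abs_mul]
    calc |f ω| * |h ω| ≤ 1 * |h ω| :=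
          mul_le_mul_of_nonneg_right (hfbd ω) (abs_nonneg _)
      _ = |h ω| := one_mul _
  have hker : Kernel.IndepFun f h (condExpKernel (mΩ := mΩ) μ m') (μ.trim hm') := hind
  have hsets : ∀ q r : ℚ, ∀ᵐ ω ∂μ,
      condExpKernel (mΩ := mΩ) μ m' ω (f ⁻¹' Set.Iic (q : ℝ) ∩ h ⁻¹' Set.Iic (r : ℝ))
        = condExpKernel (mΩ := mΩ) μ m' ω (f ⁻¹' Set.Iic (q : ℝ))
          * condExpKernel (mΩ := mΩ) μ m' ω (h ⁻¹' Set.Iic (r : ℝ)) := fun q r =>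
    ae_of_ae_trim hm' (hker _ _ ⟨Set.Iic (q : ℝ), measurableSet_Iic, rfl⟩
      ⟨Set.Iic (r : ℝ), measurableSet_Iic, rfl⟩)
  have hindep_ae : ∀ᵐ ω ∂μ, IndepFun f h (condExpKernel (mΩ := mΩ) μ m' ω) := by
    have hall : ∀ᵐ ω ∂μ, ∀ q r : ℚ,
        condExpKernel (mΩ := mΩ) μ m' ω (f ⁻¹' Set.Iic (q : ℝ) ∩ h ⁻¹' Set.Iic (r : ℝ))
          = condExpKernel (mΩ := mΩ) μ m' ω (f ⁻¹' Set.Iic (q : ℝ))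
            * condExpKernel (mΩ := mΩ) μ m' ω (h ⁻¹' Set.Iic (r : ℝ)) := by
      rw [ae_all_iff]; intro q; rw [ae_all_iff]; intro r; exact hsets q r
    filter_upwards [hall] with ω hω
    rw [IndepFun_iff_Indep]
    refine IndepSets.indep hf.comap_le hh.comap_le (aux_isPiSystem f) (aux_isPiSystem h)
      (aux_comap_eq f) (aux_comap_eq h) ?_
    rintro _ _ ⟨s, hs, rfl⟩ ⟨t, ht, rfl⟩
    simp only [Set.mem_iUnion, Set.mem_singleton_iff] at hs ht
    obtain ⟨q, rfl⟩ := hs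
    obtain ⟨r, rfl⟩ := ht
    exact ae_of_all _ fun _ => hω q r
  filter_upwards [condExp_ae_eq_integral_condExpKernel (Ω := Ω) (mΩ := mΩ) hm' hfh_int,
    condExp_ae_eq_integral_condExpKernel (Ω := Ω) (mΩ := mΩ) hm' hf_int,
    condExp_ae_eq_integral_condExpKernel (Ω := Ω) (mΩ := mΩ) hm' hhi,
    hindep_ae, Integrable.condExpKernel_ae (mΩ := mΩ) (m := m') hhi] with ω e1 e2 e3 hiω hhω
  rw [e1, e2, e3]
  have hfω : Integrable f (condExpKernel (mΩ := mΩ) μ m' ω) := by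
    exact (integrable_const (1 : ℝ)).mono' hf.aestronglyMeasurable (ae_of_all _ hfbd)
  have := hiω.integral_mul_eq_mul_integral hfω.aestronglyMeasurable hhω.aestronglyMeasurable
  simpa [Pi.mul_apply] using this

/-- Main auxiliary lemma, with abstract σ-algebras. -/
lemma ipw_aux
    {Ω : Type*} {mΩ : MeasurableSpace Ω} [StandardBorelSpace Ω]
    (μ : Measure Ω) [IsProbabilityMeasure μ]
    {m' mZ : MeasurableSpace Ω} (hm' : m' ≤ mΩ) (hmZm' : mZ ≤ m')
    (A : Ω → ℝ) (hAm : Measurable[mΩ] A) (hA01 : ∀ ω, A ω = 0 ∨ A ω = 1)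
    (Y0 Y1 : Ω → ℝ) (hY0m : Measurable[mΩ] Y0) (hY1m : Measurable[mΩ] Y1)
    (hY0i : Integrable Y0 μ) (hY1i : Integrable Y1 μ)
    (Y : Ω → ℝ) (hYdef : ∀ ω, Y ω = A ω * Y1 ω + (1 - A ω) * Y0 ω)
    (hci1 : CondIndepFun m' hm' A Y1 μ) (hci0 : CondIndepFun m' hm' A Y0 μ)
    (δ : ℝ) (hδ0 : 0 < δ)
    (hover : ∀ᵐ ω ∂μ, δ ≤ (μ[A | m']) ω ∧ (μ[A | m']) ω ≤ 1 - δ) :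
    μ[fun ω => A ω * Y ω / (μ[A | m']) ω - (1 - A ω) * Y ω / (1 - (μ[A | m']) ω) | mZ]
      =ᵐ[μ] μ[fun ω => Y1 ω - Y0 ω | mZ] := by
  set π : Ω → ℝ := μ[A | m'] with hπdef
  have hAY : ∀ ω, A ω * Y ω = A ω * Y1 ω := by
    intro ω
    rcases hA01 ω with h0 | h1
    · simp [h0]
    · simp [hYdef ω, h1]
  have h1AY : ∀ ω, (1 - A ω) * Y ω = (1 - A ω) * Y0 ω := by
    intro ω
    rcases hA01 ω with h0 | h1
    · simp [hYdef ω, h0]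
    · simp [h1]
  have hAbd : ∀ ω, |A ω| ≤ 1 := by
    intro ω; rcases hA01 ω with h | h <;> simp [h]
  have key1 : μ[fun ω => A ω * Y1 ω | m'] =ᵐ[μ] fun ω => π ω * (μ[Y1 | m']) ω :=
    condexp_mul_of_condIndepFun hm' hAm hY1m hAbd hY1i hci1
  have key0 : μ[fun ω => A ω * Y0 ω | m'] =ᵐ[μ] fun ω => π ω * (μ[Y0 | m']) ω :=
    condexp_mul_of_condIndepFun hm' hAm hY0m hAbd hY0i hci0
  have hAY1_int : Integrable (fun ω => A ω * Y1 ω) μ := by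
    refine hY1i.abs.mono' (hAm.mul hY1m).aestronglyMeasurable (ae_of_all _ fun ω => ?_)
    rw [Real.norm_eq_abs, abs_mul]
    calc |A ω| * |Y1 ω| ≤ 1 * |Y1 ω| :=
          mul_le_mul_of_nonneg_right (hAbd ω) (abs_nonneg _)
      _ = |Y1 ω| := one_mul _
  have hAY0_int : Integrable (fun ω => A ω * Y0 ω) μ := by
    refine hY0i.abs.mono' (hAm.mul hY0m).aestronglyMeasurable (ae_of_all _ fun ω => ?_)
    rw [Real.norm_eq_abs, abs_mul]
    calc |A ω| * |Y0 ω| ≤ 1 * |Y0 ω| :=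
          mul_le_mul_of_nonneg_right (hAbd ω) (abs_nonneg _)
      _ = |Y0 ω| := one_mul _
  have h1AY0_int : Integrable (fun ω => (1 - A ω) * Y0 ω) μ := by
    have heq : (fun ω => (1 - A ω) * Y0 ω) = fun ω => Y0 ω - A ω * Y0 ω := by
      funext ω; ring
    rw [heq]
    exact hY0i.sub hAY0_int
  have hπsm : StronglyMeasurable[m'] π := stronglyMeasurable_condExp
  have hπm : Measurable[mΩ] π := (hπsm.mono hm').measurable
  set W1 : Ω → ℝ := fun ω => (π ω)⁻¹ * (A ω * Y1 ω) with hW1def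
  set W2 : Ω → ℝ := fun ω => (1 - π ω)⁻¹ * ((1 - A ω) * Y0 ω) with hW2def
  have hW1_int : Integrable W1 μ := by
    refine (hY1i.abs.const_mul δ⁻¹).mono'
      ((hπm.inv.mul (hAm.mul hY1m)).aestronglyMeasurable) ?_
    filter_upwards [hover] with ω hω
    rw [hW1def]
    simp only [Real.norm_eq_abs, abs_mul]
    have hπpos : 0 < π ω := lt_of_lt_of_le hδ0 hω.1
    have h1 : |(π ω)⁻¹| ≤ δ⁻¹ := by
      rw [abs_of_pos (inv_pos.mpr hπpos)]
      exact inv_anti₀ hδ0 hω.1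
    calc |(π ω)⁻¹| * (|A ω| * |Y1 ω|) ≤ δ⁻¹ * (1 * |Y1 ω|) := by
          apply mul_le_mul h1 _ (by positivity) (by positivity)
          exact mul_le_mul_of_nonneg_right (hAbd ω) (abs_nonneg _)
      _ = δ⁻¹ * |Y1 ω| := by ring
  have hW2_int : Integrable W2 μ := by
    refine (hY0i.abs.const_mul δ⁻¹).mono'
      (((measurable_const.sub hπm).inv.mul
        ((measurable_const.sub hAm).mul hY0m)).aestronglyMeasurable) ?_
    filter_upwards [hover] with ω hω
    rw [hW2def]
    simp only [Real.norm_eq_abs, abs_mul]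
    have hπpos : 0 < 1 - π ω := by linarith [hω.2]
    have hδle : δ ≤ 1 - π ω := by linarith [hω.2]
    have h1 : |(1 - π ω)⁻¹| ≤ δ⁻¹ := by
      rw [abs_of_pos (inv_pos.mpr hπpos)]
      exact inv_anti₀ hδ0 hδle
    have h2 : |1 - A ω| ≤ 1 := by
      rcases hA01 ω with h | h <;> simp [h]
    calc |(1 - π ω)⁻¹| * (|1 - A ω| * |Y0 ω|) ≤ δ⁻¹ * (1 * |Y0 ω|) := by
          apply mul_le_mul h1 _ (by positivity) (by positivity)
          exact mul_le_mul_of_nonneg_right h2 (abs_nonneg _)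
      _ = δ⁻¹ * |Y0 ω| := by ring
  have hW1ce : μ[W1 | m'] =ᵐ[μ] μ[Y1 | m'] := by
    have hpull : μ[(fun ω => (π ω)⁻¹) * (fun ω => A ω * Y1 ω) | m']
        =ᵐ[μ] (fun ω => (π ω)⁻¹) * μ[fun ω => A ω * Y1 ω | m'] :=
      condExp_mul_of_stronglyMeasurable_left (hπsm.measurable.inv.stronglyMeasurable) (by exact hW1_int) hAY1_int
    have hW : μ[W1 | m'] =ᵐ[μ] (fun ω => (π ω)⁻¹) * μ[fun ω => A ω * Y1 ω | m'] := hpull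
    refine hW.trans ?_
    filter_upwards [key1, hover] with ω h1 h2
    have hπne : π ω ≠ 0 := by
      have := lt_of_lt_of_le hδ0 h2.1; linarith
    simp only [Pi.mul_apply, h1]
    field_simp
  have hW2ce : μ[W2 | m'] =ᵐ[μ] μ[Y0 | m'] := by
    have hsm : StronglyMeasurable[m'] (fun ω => (1 - π ω)⁻¹) :=
      ((stronglyMeasurable_const.sub hπsm).measurable.inv.stronglyMeasurable)
    have hpull : μ[(fun ω => (1 - π ω)⁻¹) * (fun ω => (1 - A ω) * Y0 ω) | m']
        =ᵐ[μ] (fun ω => (1 - π ω)⁻¹) * μ[fun ω => (1 - A ω) * Y0 ω | m'] :=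
      condExp_mul_of_stronglyMeasurable_left hsm (by exact hW2_int) h1AY0_int
    have hsub : μ[fun ω => (1 - A ω) * Y0 ω | m']
        =ᵐ[μ] fun ω => (μ[Y0 | m']) ω - (μ[fun ω => A ω * Y0 ω | m']) ω := by
      have heq : (fun ω => (1 - A ω) * Y0 ω) = (fun ω => Y0 ω - A ω * Y0 ω) := by
        funext ω; ring
      rw [heq]
      exact condExp_sub hY0i hAY0_int m'
    have hW : μ[W2 | m'] =ᵐ[μ]
        (fun ω => (1 - π ω)⁻¹) * μ[fun ω => (1 - A ω) * Y0 ω | m'] := hpull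
    refine hW.trans ?_
    filter_upwards [hsub, key0, hover] with ω h1 h2 h3
    have hπne : 1 - π ω ≠ 0 := by
      have := h3.2; intro hc
      have : δ ≤ 0 := by linarith
      linarith
    simp only [Pi.mul_apply, h1, h2]
    field_simp
  have hWce : μ[fun ω => A ω * Y ω / π ω - (1 - A ω) * Y ω / (1 - π ω) | m']
      =ᵐ[μ] μ[fun ω => Y1 ω - Y0 ω | m'] := by
    have heq : (fun ω => A ω * Y ω / π ω - (1 - A ω) * Y ω / (1 - π ω))
        = fun ω => W1 ω - W2 ω := by
      funext ω
      rw [hW1def, hW2def, hAY ω, h1AY ω]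
      ring
    rw [heq]
    have h1 : μ[fun ω => W1 ω - W2 ω | m'] =ᵐ[μ] μ[W1 | m'] - μ[W2 | m'] :=
      condExp_sub hW1_int hW2_int m'
    have h2 : μ[fun ω => Y1 ω - Y0 ω | m'] =ᵐ[μ] μ[Y1 | m'] - μ[Y0 | m'] :=
      condExp_sub hY1i hY0i m'
    refine h1.trans (.trans ?_ h2.symm)
    filter_upwards [hW1ce, hW2ce] with ω e1 e2
    simp only [Pi.sub_apply, e1, e2]
  calc μ[fun ω => A ω * Y ω / π ω - (1 - A ω) * Y ω / (1 - π ω) | mZ]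
      =ᵐ[μ] μ[μ[fun ω => A ω * Y ω / π ω - (1 - A ω) * Y ω / (1 - π ω) | m'] | mZ] :=
        (condExp_condExp_of_le hmZm' hm').symm
    _ =ᵐ[μ] μ[μ[fun ω => Y1 ω - Y0 ω | m'] | mZ] := condExp_congr_ae hWce
    _ =ᵐ[μ] μ[fun ω => Y1 ω - Y0 ω | mZ] := condExp_condExp_of_le hmZm' hm'

end Aux

/-- Inverse probability weighting representation of the GATE: under
unconfoundedness and strict overlap,
`E[ A·Y/π(X) − (1−A)·Y/(1 − π(X)) | σ(Z) ] = E[Y1 − Y0 | σ(Z)]` a.s.,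
where `π(X) = E[A | σ(X)]`, `Y = A·Y1 + (1−A)·Y0` and `Z = g ∘ X`. -/
theorem ipw_representation_of_gate
    {Ω : Type*} [MeasurableSpace Ω] [StandardBorelSpace Ω]
    {S : Type*} [MeasurableSpace S]
    (μ : Measure Ω) [IsProbabilityMeasure μ]
    (A : Ω → ℝ) (hAm : Measurable A) (hA01 : ∀ ω, A ω = 0 ∨ A ω = 1)
    (X : Ω → S) (hXm : Measurable X)
    (Y0 Y1 : Ω → ℝ) (hY0m : Measurable Y0) (hY1m : Measurable Y1)
    (hY0i : Integrable Y0 μ) (hY1i : Integrable Y1 μ)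
    (Y : Ω → ℝ) (hYdef : ∀ ω, Y ω = A ω * Y1 ω + (1 - A ω) * Y0 ω)
    (huncf : CondIndepFun (MeasurableSpace.comap X inferInstance) (hXm.comap_le)
      A (fun ω => (Y0 ω, Y1 ω)) μ)
    (δ : ℝ) (hδ0 : 0 < δ) (hδhalf : δ < 1 / 2)
    (hover : ∀ᵐ ω ∂μ, δ ≤ (μ[A | MeasurableSpace.comap X inferInstance]) ω
      ∧ (μ[A | MeasurableSpace.comap X inferInstance]) ω ≤ 1 - δ)
    (g : S → ℝ) (hg : Measurable g) :
    μ[fun ω =>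
        A ω * Y ω / (μ[A | MeasurableSpace.comap X inferInstance]) ω
        - (1 - A ω) * Y ω / (1 - (μ[A | MeasurableSpace.comap X inferInstance]) ω)
      | MeasurableSpace.comap (fun ω => g (X ω)) inferInstance]
      =ᵐ[μ]
    μ[fun ω => Y1 ω - Y0 ω
      | MeasurableSpace.comap (fun ω => g (X ω)) inferInstance] := by
  have hmZm' : MeasurableSpace.comap (fun ω => g (X ω)) inferInstance
      ≤ MeasurableSpace.comap X inferInstance := by
    have h1 : MeasurableSpace.comap (fun ω => g (X ω))
        (inferInstance : MeasurableSpace ℝ)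
        = MeasurableSpace.comap X (MeasurableSpace.comap g inferInstance) :=
      (MeasurableSpace.comap_comp).symm
    rw [h1]
    exact MeasurableSpace.comap_mono hg.comap_le
  have hci1 : CondIndepFun (MeasurableSpace.comap X inferInstance) hXm.comap_le A Y1 μ := by
    have := huncf.comp measurable_id measurable_snd
    simpa [Function.comp_def] using this
  have hci0 : CondIndepFun (MeasurableSpace.comap X inferInstance) hXm.comap_le A Y0 μ := by
    have := huncf.comp measurable_id measurable_fst
    simpa [Function.comp_def] using this
  exact ipw_aux μ hXm.comap_le hmZm' A hAm hA01 Y0 Y1 hY0m hY1m hY0i hY1i Y hYdef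
    hci1 hci0 δ hδ0 hover
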